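/- arXiv:1201.4825 — 3 statements merged into one kernel-verified Lean document; each statement's English description precedes it below -/
import Mathlib

section
/- Let a : ℝ² → ℝ² be given by a(x₁,x₂) = (|x₂|^α, 0) for 0 < α < 1, and define u(x₁,x₂) = x₁ + ∫₀^{x₂} √(2|t|^α − |t|^{2α}) dt. Then for all x with |x₂| ≤ 1, the gradient of u satisfies |∇u(x) − a(x)|² = 1. -/
/-- For `a(x₁,x₂) = (|x₂|^α, 0)` and
`u(x₁,x₂) = x₁ + ∫₀^{x₂} √(2|t|^α − |t|^{2α}) dt`, for all `x` with `|x₂| ≤ 1`,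
`u` is differentiable and `|∇u(x) − a(x)|² = 1`. -/
theorem stmt0 (α : ℝ) (hα : 0 < α ∧ α < 1)
    (u : ℝ × ℝ → ℝ)
    (hu : ∀ x : ℝ × ℝ,
      u x = x.1 + ∫ t in (0:ℝ)..x.2, Real.sqrt (2 * |t| ^ α - |t| ^ (2 * α)))
    (x : ℝ × ℝ) (hx : |x.2| ≤ 1) :
    DifferentiableAt ℝ u x ∧
      (fderiv ℝ u x (1, 0) - |x.2| ^ α) ^ 2 + (fderiv ℝ u x (0, 1)) ^ 2 = 1 := by
  obtain ⟨hα0, hα1⟩ := hα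
  set f : ℝ → ℝ := fun t => Real.sqrt (2 * |t| ^ α - |t| ^ (2 * α)) with hf
  have hcont : Continuous f := by
    apply Real.continuous_sqrt.comp
    have h1 : Continuous (fun t : ℝ => |t| ^ α) :=
      continuous_abs.rpow_const (fun t => Or.inr hα0.le)
    have h2 : Continuous (fun t : ℝ => |t| ^ (2 * α)) :=
      continuous_abs.rpow_const (fun t => Or.inr (by positivity))
    continuity
  have hb : HasDerivAt (fun y => ∫ t in (0:ℝ)..y, f t) (f x.2) x.2 :=
    (hcont.integral_hasStrictDerivAt 0 x.2).hasDerivAt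
  have hU : HasFDerivAt u
      ((ContinuousLinearMap.fst ℝ ℝ ℝ) + f x.2 • (ContinuousLinearMap.snd ℝ ℝ ℝ)) x := by
    have h1 : HasFDerivAt (fun p : ℝ × ℝ => p.1) (ContinuousLinearMap.fst ℝ ℝ ℝ) x :=
      hasFDerivAt_fst
    have h2 : HasFDerivAt (fun p : ℝ × ℝ => ∫ t in (0:ℝ)..p.2, f t)
        (f x.2 • (ContinuousLinearMap.snd ℝ ℝ ℝ)) x :=
      hb.comp_hasFDerivAt x hasFDerivAt_snd
    have := h1.add h2
    refine this.congr_of_eventuallyEq ?_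
    filter_upwards with p
    rw [hu p]
    rfl
  have hdiff : DifferentiableAt ℝ u x := hU.differentiableAt
  refine ⟨hdiff, ?_⟩
  rw [hU.fderiv]
  simp only [ContinuousLinearMap.add_apply, ContinuousLinearMap.coe_fst',
    ContinuousLinearMap.smul_apply, ContinuousLinearMap.coe_snd', smul_eq_mul]
  have hxα : |x.2| ^ α ≤ 1 := Real.rpow_le_one (abs_nonneg _) hx hα0.le
  have hsq : |x.2| ^ (2 * α) = (|x.2| ^ α) ^ 2 := by
    rw [← Real.rpow_natCast (|x.2| ^ α) 2, ← Real.rpow_mul (abs_nonneg _)]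
    norm_num; ring_nf
  have hnn : 0 ≤ 2 * |x.2| ^ α - |x.2| ^ (2 * α) := by
    rw [hsq]
    nlinarith [Real.rpow_nonneg (abs_nonneg x.2) α]
  have hfsq : f x.2 ^ 2 = 2 * |x.2| ^ α - |x.2| ^ (2 * α) := Real.sq_sqrt hnn
  rw [hsq] at hfsq
  nlinarith [hfsq]
end

section
/- Suppose h : B₁ → ℝ is Lipschitz, h(0) = 0, h(x) ≥ −C₁|x|^{1+β} for all x ∈ B₁, and for every x⁰ ∈ B₁ and every p in the super-differential of h at x⁰ one has h(x⁰ + x) ≤ h(x⁰) + p·x + C₀|x|^{1+β} for all x with x⁰ + x ∈ B₁. Then there exists a constant E(β), depending continuously on β ∈ (0,1), such that for every y ∈ B_{1/2} and every p in the super-differential of h at y, |p| ≤ E(β)(C₀ + C₁)|y|^β. -/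
open Metric

/-- The super-differential of `h` at `x₀` relative to the set `Ω`:
`p ∈ S⁺(h,x₀)` iff `h(x₀+x) ≤ h(x₀) + ⟪p,x⟫ + o(|x|)` as `x → 0` within `Ω`. -/
def superDiff {n : ℕ} (h : EuclideanSpace ℝ (Fin n) → ℝ)
    (Ω : Set (EuclideanSpace ℝ (Fin n))) (x₀ : EuclideanSpace ℝ (Fin n)) :
    Set (EuclideanSpace ℝ (Fin n)) :=
  {p | ∀ ε > 0, ∃ δ > 0, ∀ x : EuclideanSpace ℝ (Fin n), ‖x‖ < δ → x₀ + x ∈ Ω →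
    h (x₀ + x) ≤ h x₀ + (inner ℝ p x : ℝ) + ε * ‖x‖}

lemma rpow_add_le_add_rpow_real (a b p : ℝ) (ha : 0 ≤ a) (hb : 0 ≤ b)
    (hp : 0 ≤ p) (hp1 : p ≤ 1) : (a + b) ^ p ≤ a ^ p + b ^ p := by
  have h := NNReal.rpow_add_le_add_rpow a.toNNReal b.toNNReal hp hp1
  have := NNReal.coe_le_coe.2 h
  push_cast at this
  rwa [Real.coe_toNNReal _ ha, Real.coe_toNNReal _ hb] at this

lemma key3 {ρ r β : ℝ} (hρ0 : 0 ≤ ρ) (hr0 : 0 ≤ r) (hsum : ρ + r ≤ 1)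
    (hβ0 : 0 < β) (hβ1 : β ≤ 1) : (ρ + r) ^ (1 + β) ≤ r ^ (1 + β) + 2 * ρ ^ β := by
  have hA0 : (0:ℝ) ≤ ρ + r := by linarith
  have h1β : (1:ℝ) + β ≠ 0 := by linarith
  have e1 : (ρ + r) ^ (1 + β) = (ρ + r) * (ρ + r) ^ β := by
    rw [Real.rpow_add' hA0 h1β, Real.rpow_one]
  have e2 : r ^ (1 + β) = r * r ^ β := by
    rw [Real.rpow_add' hr0 h1β, Real.rpow_one]
  have h3 : (ρ + r) ^ β ≤ ρ ^ β + r ^ β :=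
    rpow_add_le_add_rpow_real ρ r β hρ0 hr0 hβ0.le hβ1
  have hρβ : ρ ≤ ρ ^ β := by
    calc ρ = ρ ^ (1:ℝ) := (Real.rpow_one ρ).symm
    _ ≤ ρ ^ β := Real.rpow_le_rpow_of_exponent_ge' hρ0 (by linarith) hβ0.le hβ1
  have hrβ1 : r ^ β ≤ 1 := Real.rpow_le_one hr0 (by linarith) hβ0.le
  have hρβ0 : 0 ≤ ρ ^ β := Real.rpow_nonneg hρ0 β
  have hrβ0 : 0 ≤ r ^ β := Real.rpow_nonneg hr0 β
  calc (ρ + r) ^ (1 + β) = (ρ + r) * (ρ + r) ^ β := e1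
    _ ≤ (ρ + r) * (ρ ^ β + r ^ β) := by
        apply mul_le_mul_of_nonneg_left h3 hA0
    _ = (ρ + r) * ρ ^ β + ρ * r ^ β + r * r ^ β := by ring
    _ ≤ 1 * ρ ^ β + ρ * 1 + r * r ^ β := by gcongr
    _ ≤ r ^ (1 + β) + 2 * ρ ^ β := by rw [e2]; nlinarith

set_option maxHeartbeats 1000000 in
/-- one-sided `C^{1,β}` estimates plus a lower bound `h ≥ −C₁|x|^{1+β}`
and `h(0)=0` force `|p| ≤ E(β)(C₀+C₁)|y|^β` for every `p` in the super-differential of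
`h` at `y ∈ B_{1/2}`, where `E` depends continuously on `β ∈ (0,1)`. -/
theorem stmt2 (n : ℕ) :
    ∃ E : ℝ → ℝ, ContinuousOn E (Set.Ioo (0:ℝ) 1) ∧
      ∀ (β : ℝ), β ∈ Set.Ioo (0:ℝ) 1 →
      ∀ (C₀ C₁ : ℝ), 0 ≤ C₀ → 0 ≤ C₁ →
      ∀ (h : EuclideanSpace ℝ (Fin n) → ℝ) (L : NNReal),
        LipschitzOnWith L h (ball (0 : EuclideanSpace ℝ (Fin n)) 1) →
        h 0 = 0 →
        (∀ x ∈ ball (0 : EuclideanSpace ℝ (Fin n)) 1, -C₁ * ‖x‖ ^ (1 + β) ≤ h x) →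
        (∀ x₀ ∈ ball (0 : EuclideanSpace ℝ (Fin n)) 1,
          ∀ p ∈ superDiff h (ball 0 1) x₀,
          ∀ x : EuclideanSpace ℝ (Fin n), x₀ + x ∈ ball (0 : EuclideanSpace ℝ (Fin n)) 1 →
            h (x₀ + x) ≤ h x₀ + (inner ℝ p x : ℝ) + C₀ * ‖x‖ ^ (1 + β)) →
        ∀ y ∈ ball (0 : EuclideanSpace ℝ (Fin n)) (1/2),
          ∀ p ∈ superDiff h (ball 0 1) y,
            ‖p‖ ≤ E β * (C₀ + C₁) * ‖y‖ ^ β := by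
  refine ⟨fun _ => 8, continuousOn_const, ?_⟩
  rintro β ⟨hβ0, hβ1⟩ C₀ C₁ hC₀ hC₁ h L hL hh0 hlow hsemi y hy p hp
  have h1β0 : (0:ℝ) < 1 + β := by linarith
  have hLnn : (0:ℝ) ≤ (L:ℝ) := L.coe_nonneg
  have h0ball : (0 : EuclideanSpace ℝ (Fin n)) ∈ ball (0 : EuclideanSpace ℝ (Fin n)) 1 :=
    mem_ball_self one_pos
  -- Lipschitz upper bound through the origin
  have hLr : ∀ x ∈ ball (0 : EuclideanSpace ℝ (Fin n)) 1, h x ≤ (L:ℝ) * ‖x‖ := by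
    intro x hx
    have hd := hL.dist_le_mul x hx 0 h0ball
    rw [Real.dist_eq, hh0, sub_zero, dist_zero_right] at hd
    calc h x ≤ |h x| := le_abs_self _
      _ ≤ (L:ℝ) * ‖x‖ := hd
  -- KEY 1 : directional bound on ‖q‖ for q in a super-differential
  have key1 : ∀ x₀ ∈ ball (0 : EuclideanSpace ℝ (Fin n)) 1,
      ∀ q ∈ superDiff h (ball 0 1) x₀, ∀ t : ℝ, 0 < t → ‖x₀‖ + t < 1 →
      t * ‖q‖ ≤ h x₀ + C₁ * (‖x₀‖ + t) ^ (1+β) + C₀ * t ^ (1+β) := by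
    intro x₀ hx₀ q hq t ht h1
    have hx₀n : (0:ℝ) ≤ ‖x₀‖ := norm_nonneg _
    have hmono : ‖x₀‖ ^ (1+β) ≤ (‖x₀‖ + t) ^ (1+β) :=
      Real.rpow_le_rpow hx₀n (by linarith) h1β0.le
    by_cases hq0 : q = 0
    · subst hq0
      simp only [norm_zero, mul_zero]
      have l1 := hlow x₀ hx₀
      have h2 : C₁ * ‖x₀‖ ^ (1+β) ≤ C₁ * (‖x₀‖ + t) ^ (1+β) :=
        mul_le_mul_of_nonneg_left hmono hC₁
      have h3 : (0:ℝ) ≤ C₀ * t ^ (1+β) := by positivity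
      linarith
    · set x : EuclideanSpace ℝ (Fin n) := -((t / ‖q‖) • q) with hxdef
      have hqn : 0 < ‖q‖ := norm_pos_iff.2 hq0
      have hxn : ‖x‖ = t := by
        rw [hxdef, norm_neg, norm_smul, Real.norm_eq_abs, abs_of_pos (by positivity),
          div_mul_cancel₀ _ hqn.ne']
      have hmem : x₀ + x ∈ ball (0 : EuclideanSpace ℝ (Fin n)) 1 := by
        rw [mem_ball, dist_zero_right]
        calc ‖x₀ + x‖ ≤ ‖x₀‖ + ‖x‖ := norm_add_le _ _
          _ < 1 := by rw [hxn]; exact h1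
      have hup := hsemi x₀ hx₀ q hq x hmem
      have hinner : (inner ℝ q x : ℝ) = -(t * ‖q‖) := by
        rw [hxdef, inner_neg_right, real_inner_smul_right, real_inner_self_eq_norm_mul_norm]
        field_simp
      have hlo := hlow (x₀ + x) hmem
      have hn2 : ‖x₀ + x‖ ^ (1+β) ≤ (‖x₀‖ + t) ^ (1+β) := by
        apply Real.rpow_le_rpow (norm_nonneg _) _ h1β0.le
        calc ‖x₀ + x‖ ≤ ‖x₀‖ + ‖x‖ := norm_add_le _ _
          _ = ‖x₀‖ + t := by rw [hxn]
      rw [hinner, hxn] at hup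
      have hn3 : C₁ * ‖x₀ + x‖ ^ (1+β) ≤ C₁ * (‖x₀‖ + t) ^ (1+β) :=
        mul_le_mul_of_nonneg_left hn2 hC₁
      linarith
  -- KEY 2 : tangent-plane upper bound
  have key2 : ∀ x₀ ∈ ball (0 : EuclideanSpace ℝ (Fin n)) 1,
      ∀ q ∈ superDiff h (ball 0 1) x₀, ∀ z ∈ ball (0 : EuclideanSpace ℝ (Fin n)) 1,
      h z ≤ h x₀ + ‖q‖ * ‖z - x₀‖ + C₀ * ‖z - x₀‖ ^ (1+β) := by
    intro x₀ hx₀ q hq z hz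
    have hid : x₀ + (z - x₀) = z := by abel
    have h1 := hsemi x₀ hx₀ q hq (z - x₀) (by rwa [hid])
    rw [hid] at h1
    have hcs : (inner ℝ q (z - x₀) : ℝ) ≤ ‖q‖ * ‖z - x₀‖ := real_inner_le_norm q (z - x₀)
    linarith
  show ‖p‖ ≤ 8 * (C₀ + C₁) * ‖y‖ ^ β
  by_cases hy0 : y = (0 : EuclideanSpace ℝ (Fin n))
  · -- at the origin the super-differential is {0}
    subst hy0
    rw [norm_zero, Real.zero_rpow hβ0.ne', mul_zero]
    have hbd : ∀ t : ℝ, 0 < t → t < 1/2 → ‖p‖ ≤ (C₀ + C₁) * t ^ β := by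
      intro t ht ht1
      have hk := key1 0 h0ball p hp t ht (by rw [norm_zero]; linarith)
      rw [hh0, norm_zero, zero_add, zero_add] at hk
      have htβ : t ^ (1+β) = t * t ^ β := by
        rw [Real.rpow_add' ht.le (by linarith), Real.rpow_one]
      rw [htβ] at hk
      have h2 : t * ‖p‖ ≤ t * ((C₀ + C₁) * t ^ β) := by nlinarith
      exact le_of_mul_le_mul_left h2 ht
    have hc : Filter.Tendsto (fun t : ℝ => t ^ β) (nhds 0) (nhds 0) := by
      have := (Real.continuousAt_rpow_const 0 β (Or.inr hβ0.le)).tendsto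
      rwa [Real.zero_rpow hβ0.ne'] at this
    have htend : Filter.Tendsto (fun t : ℝ => (C₀ + C₁) * t ^ β)
        (nhdsWithin 0 (Set.Ioi 0)) (nhds 0) := by
      have h2 := (hc.const_mul (C₀ + C₁)).mono_left
        (nhdsWithin_le_nhds : nhdsWithin (0:ℝ) (Set.Ioi 0) ≤ nhds 0)
      rwa [mul_zero] at h2
    refine ge_of_tendsto htend ?_
    filter_upwards [Ioo_mem_nhdsGT_of_mem (by norm_num : (0:ℝ) ∈ Set.Ico 0 (1/2))] with t ht
    exact hbd t ht.1 ht.2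
  · -- y ≠ 0
    have hy1 : y ∈ ball (0 : EuclideanSpace ℝ (Fin n)) 1 :=
      ball_subset_ball (by norm_num) hy
    have hr2 : ‖y‖ < 1/2 := by rwa [mem_ball, dist_zero_right] at hy
    have hr0 : 0 < ‖y‖ := norm_pos_iff.2 hy0
    -- upper bound on h y via a touching argument
    have hup : ∀ ε : ℝ, 0 < ε → h y ≤ 3 * (C₀ + C₁) * ‖y‖ ^ (1+β) + ε := by
      intro ε hε
      set ρ : ℝ := min (min ‖y‖ (1/16))
        (min (ε / (4 * (L:ℝ) + 4)) ((ε / (8 * (C₀ + C₁) + 8)) ^ (β⁻¹))) with hρdef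
      have hρ0 : 0 < ρ := by
        apply lt_min (lt_min hr0 (by norm_num))
        apply lt_min (by positivity) (by positivity)
      have hρy : ρ ≤ ‖y‖ := le_trans (min_le_left _ _) (min_le_left _ _)
      have hρ16 : ρ ≤ 1/16 := le_trans (min_le_left _ _) (min_le_right _ _)
      have hρL : ρ ≤ ε / (4 * (L:ℝ) + 4) := le_trans (min_le_right _ _) (min_le_left _ _)
      have hρε : ρ ≤ (ε / (8 * (C₀ + C₁) + 8)) ^ (β⁻¹) :=
        le_trans (min_le_right _ _) (min_le_right _ _)
      set K : ℝ := ((L:ℝ) + C₀ + 1) / ρ with hKdef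
      have hK0 : 0 < K := by positivity
      have hKL : (L:ℝ) + C₀ + 1 = K * ρ := by
        rw [hKdef, div_mul_cancel₀ _ hρ0.ne']
      have hKbig : 16 * ((L:ℝ) + C₀ + 1) ≤ K := by
        rw [hKdef, le_div_iff₀ hρ0]
        nlinarith
      clear_value ρ K
      clear hρdef hKdef
      -- maximize h - K‖·‖² over the closed ball of radius 3/4
      obtain ⟨xs, hxsmem, hxsmax⟩ : ∃ xs ∈ closedBall (0 : EuclideanSpace ℝ (Fin n)) (3/4),
          ∀ z ∈ closedBall (0 : EuclideanSpace ℝ (Fin n)) (3/4),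
            h z - K * ‖z‖^2 ≤ h xs - K * ‖xs‖^2 := by
        have hcpt : IsCompact (closedBall (0 : EuclideanSpace ℝ (Fin n)) (3/4)) :=
          isCompact_closedBall _ _
        have hsub : closedBall (0 : EuclideanSpace ℝ (Fin n)) (3/4) ⊆
            ball (0 : EuclideanSpace ℝ (Fin n)) 1 := closedBall_subset_ball (by norm_num)
        have hcont : ContinuousOn (fun z : EuclideanSpace ℝ (Fin n) => h z - K * ‖z‖^2)
            (closedBall (0 : EuclideanSpace ℝ (Fin n)) (3/4)) := by
          apply ContinuousOn.sub (hL.continuousOn.mono hsub)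
          fun_prop
        obtain ⟨xs, hmem, hmax⟩ := hcpt.exists_isMaxOn
          ⟨0, mem_closedBall_self (by norm_num)⟩ hcont
        exact ⟨xs, hmem, fun z hz => hmax hz⟩
      have hxs34 : ‖xs‖ ≤ 3/4 := by rwa [mem_closedBall, dist_zero_right] at hxsmem
      have hxsn : (0:ℝ) ≤ ‖xs‖ := norm_nonneg _
      have hg0 : 0 ≤ h xs - K * ‖xs‖^2 := by
        have h1 := hxsmax 0 (mem_closedBall_self (by norm_num))
        simpa [hh0] using h1
      have hxslt : ‖xs‖ < 3/4 := by
        rcases lt_or_eq_of_le hxs34 with hlt | heq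
        · exact hlt
        · exfalso
          have hxsball : xs ∈ ball (0 : EuclideanSpace ℝ (Fin n)) 1 := by
            rw [mem_ball, dist_zero_right]; linarith
          have h1 := hLr xs hxsball
          rw [heq] at h1 hg0
          nlinarith
      have hxsball : xs ∈ ball (0 : EuclideanSpace ℝ (Fin n)) 1 := by
        rw [mem_ball, dist_zero_right]; linarith
      set q : EuclideanSpace ℝ (Fin n) := (2*K) • xs with hqdef
      -- q belongs to the super-differential at xs
      have hqsd : q ∈ superDiff h (ball (0 : EuclideanSpace ℝ (Fin n)) 1) xs := by
        intro ε' hε'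
        refine ⟨min (ε'/K) (3/4 - ‖xs‖), lt_min (by positivity) (by linarith), ?_⟩
        intro x hx hxball2
        have hx1 : ‖x‖ < ε'/K := lt_of_lt_of_le hx (min_le_left _ _)
        have hx2 : ‖x‖ < 3/4 - ‖xs‖ := lt_of_lt_of_le hx (min_le_right _ _)
        have hmem2 : xs + x ∈ closedBall (0 : EuclideanSpace ℝ (Fin n)) (3/4) := by
          rw [mem_closedBall, dist_zero_right]
          calc ‖xs + x‖ ≤ ‖xs‖ + ‖x‖ := norm_add_le _ _
            _ ≤ 3/4 := by linarith
        have hmax2 := hxsmax (xs + x) hmem2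
        have hexp : ‖xs + x‖^2 = ‖xs‖^2 + 2 * (inner ℝ xs x : ℝ) + ‖x‖^2 := norm_add_sq_real xs x
        have hinner : (inner ℝ q x : ℝ) = 2 * K * (inner ℝ xs x : ℝ) := real_inner_smul_left xs x (2*K)
        have hexpK : K * ‖xs + x‖^2 = K * ‖xs‖^2 + 2 * K * (inner ℝ xs x : ℝ) + K * ‖x‖^2 := by
          rw [hexp]; ring
        have hKx : K * ‖x‖^2 ≤ ε' * ‖x‖ := by
          have hKxe : K * ‖x‖ ≤ ε' := by
            have h2 := (lt_div_iff₀' hK0).1 hx1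
            linarith
          calc K * ‖x‖^2 = (K * ‖x‖) * ‖x‖ := by ring
            _ ≤ ε' * ‖x‖ := mul_le_mul_of_nonneg_right hKxe (norm_nonneg x)
        rw [hinner]
        linarith
      -- (a) : xs is very close to the origin
      have hsa := hsemi xs hxsball q hqsd (-xs) (by rw [add_neg_cancel]; exact h0ball)
      rw [add_neg_cancel, hh0, norm_neg] at hsa
      have hinnegxs : (inner ℝ q (-xs) : ℝ) = -(2 * K * ‖xs‖^2) := by
        rw [inner_neg_right, real_inner_smul_left, real_inner_self_eq_norm_sq]
      rw [hinnegxs] at hsa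
      have hnsle : ‖xs‖ ^ (1+β) ≤ ‖xs‖ := by
        rcases eq_or_lt_of_le hxsn with h0 | h0
        · rw [← h0, Real.zero_rpow (by linarith : (1:ℝ)+β ≠ 0)]
        · calc ‖xs‖ ^ (1+β) ≤ ‖xs‖ ^ (1:ℝ) :=
              Real.rpow_le_rpow_of_exponent_ge h0 (by linarith) (by linarith)
            _ = ‖xs‖ := Real.rpow_one _
      have hLxs : h xs ≤ (L:ℝ) * ‖xs‖ := hLr xs hxsball
      have hxsρ : ‖xs‖ ≤ ρ/2 := by
        by_contra hcon
        push_neg at hcon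
        have hsq : 2 * K * ‖xs‖^2 ≤ ((L:ℝ) + C₀) * ‖xs‖ := by nlinarith
        nlinarith [mul_pos hK0 (lt_of_le_of_lt (by linarith : (0:ℝ) ≤ ρ/2) hcon)]
      have hxshρ : h xs ≤ (L:ℝ) * (ρ/2) := le_trans hLxs (by nlinarith)
      -- (b) : bound on ‖q‖
      have hqb := key1 xs hxsball q hqsd ‖y‖ hr0 (by linarith)
      have hmono1 : (‖xs‖ + ‖y‖) ^ (1+β) ≤ (ρ + ‖y‖) ^ (1+β) :=
        Real.rpow_le_rpow (by linarith) (by linarith) (by linarith)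
      have hN : ‖y‖ * ‖q‖ ≤ (L:ℝ) * (ρ/2) + C₁ * (ρ + ‖y‖) ^ (1+β) + C₀ * ‖y‖ ^ (1+β) := by
        have := mul_le_mul_of_nonneg_left hmono1 hC₁
        linarith
      -- (c) : tangent plane at xs evaluated at y
      have hyc := key2 xs hxsball q hqsd y hy1
      have hyxs : ‖y - xs‖ ≤ ρ + ‖y‖ := by
        calc ‖y - xs‖ ≤ ‖y‖ + ‖xs‖ := norm_sub_le _ _
          _ ≤ ρ + ‖y‖ := by linarith
      have hF3 : ‖q‖ * ‖y - xs‖ ≤ 2 * (‖y‖ * ‖q‖) := by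
        have h1 : ‖q‖ * ‖y - xs‖ ≤ ‖q‖ * (2 * ‖y‖) := by
          apply mul_le_mul_of_nonneg_left _ (norm_nonneg q)
          calc ‖y - xs‖ ≤ ρ + ‖y‖ := hyxs
            _ ≤ 2 * ‖y‖ := by linarith
        linarith [h1]
      have hF5 : C₀ * ‖y - xs‖ ^ (1+β) ≤ C₀ * (ρ + ‖y‖) ^ (1+β) := by
        apply mul_le_mul_of_nonneg_left _ hC₀
        exact Real.rpow_le_rpow (norm_nonneg _) hyxs (by linarith)
      -- splitting (ρ + ‖y‖)^(1+β)
      have hk3 : (ρ + ‖y‖) ^ (1+β) ≤ ‖y‖ ^ (1+β) + 2 * ρ ^ β :=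
        key3 hρ0.le hr0.le (by linarith) hβ0 hβ1.le
      have hF6 : C₁ * (ρ + ‖y‖) ^ (1+β) ≤ C₁ * ‖y‖ ^ (1+β) + 2 * C₁ * ρ ^ β := by
        have := mul_le_mul_of_nonneg_left hk3 hC₁
        linarith
      have hF7 : C₀ * (ρ + ‖y‖) ^ (1+β) ≤ C₀ * ‖y‖ ^ (1+β) + 2 * C₀ * ρ ^ β := by
        have := mul_le_mul_of_nonneg_left hk3 hC₀
        linarith
      -- error terms
      have hF8 : 2 * (L:ℝ) * ρ ≤ ε/2 := by
        have h2 : 2 * (L:ℝ) * ρ ≤ 2 * (L:ℝ) * (ε / (4 * (L:ℝ) + 4)) :=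
          mul_le_mul_of_nonneg_left hρL (by positivity)
        have h3 : 2 * (L:ℝ) * (ε / (4 * (L:ℝ) + 4)) ≤ ε/2 := by
          have he : 2 * (L:ℝ) * (ε / (4 * (L:ℝ) + 4)) = (2 * (L:ℝ) * ε) / (4 * (L:ℝ) + 4) := by
            ring
          rw [he, div_le_div_iff₀ (by positivity) (by norm_num : (0:ℝ) < 2)]
          nlinarith [mul_nonneg hLnn hε.le]
        linarith
      have hρβb : ρ ^ β ≤ ε / (8 * (C₀ + C₁) + 8) := by
        have h1 : ρ ^ β ≤ ((ε / (8 * (C₀ + C₁) + 8)) ^ (β⁻¹)) ^ β :=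
          Real.rpow_le_rpow hρ0.le hρε hβ0.le
        rwa [← Real.rpow_mul (by positivity), inv_mul_cancel₀ hβ0.ne', Real.rpow_one] at h1
      have hF9 : (4 * C₁ + 2 * C₀) * ρ ^ β ≤ ε/2 := by
        have hden : (0:ℝ) < 8 * (C₀ + C₁) + 8 := by positivity
        have h1 : (4 * C₁ + 2 * C₀) * ρ ^ β ≤ (4 * (C₀ + C₁) + 4) * (ε / (8 * (C₀ + C₁) + 8)) := by
          apply mul_le_mul (by linarith) hρβb (Real.rpow_nonneg hρ0.le β) (by linarith)
        have h2 : (4 * (C₀ + C₁) + 4) * (ε / (8 * (C₀ + C₁) + 8)) = ε/2 := by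
          field_simp
          ring
        linarith
      have hpos : (0:ℝ) ≤ C₁ * ‖y‖ ^ (1+β) := by positivity
      linarith
    -- conclude the upper bound on h y
    have hupf : h y ≤ 3 * (C₀ + C₁) * ‖y‖ ^ (1+β) := by
      by_contra hcon
      push_neg at hcon
      have := hup ((h y - 3 * (C₀ + C₁) * ‖y‖ ^ (1+β))/2) (by linarith)
      linarith
    -- final estimate
    have hfin := key1 y hy1 p hp ‖y‖ hr0 (by linarith)
    have h2r : (2:ℝ) ^ (1+β) ≤ 4 := by
      calc (2:ℝ) ^ (1+β) ≤ (2:ℝ) ^ (2:ℝ) :=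
          Real.rpow_le_rpow_of_exponent_le (by norm_num) (by linarith)
        _ = 4 := by
          rw [show (2:ℝ) = ((2:ℕ):ℝ) from by norm_num, Real.rpow_natCast]
          norm_num
    have h2rp : (‖y‖ + ‖y‖) ^ (1+β) ≤ 4 * ‖y‖ ^ (1+β) := by
      have he : (‖y‖ + ‖y‖ : ℝ) = 2 * ‖y‖ := by ring
      rw [he, Real.mul_rpow (by norm_num) hr0.le]
      have := Real.rpow_nonneg hr0.le (1+β)
      nlinarith
    have hsplit : ‖y‖ ^ (1+β) = ‖y‖ * ‖y‖ ^ β := by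
      rw [Real.rpow_add' hr0.le (by linarith), Real.rpow_one]
    have hfin2 : ‖y‖ * ‖p‖ ≤ ‖y‖ * (8 * (C₀ + C₁) * ‖y‖ ^ β) := by
      have hc1 : C₁ * (‖y‖ + ‖y‖) ^ (1+β) ≤ 4 * C₁ * ‖y‖ ^ (1+β) := by
        have := mul_le_mul_of_nonneg_left h2rp hC₁
        linarith
      have hC0y : (0:ℝ) ≤ C₀ * ‖y‖ ^ (1+β) := by positivity
      have hC1y : (0:ℝ) ≤ C₁ * ‖y‖ ^ (1+β) := by positivity
      have hgoal : ‖y‖ * ‖p‖ ≤ 8 * (C₀ + C₁) * ‖y‖ ^ (1+β) := by linarith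
      rw [hsplit] at hgoal
      linarith [hgoal]
    exact le_of_mul_le_mul_left (by linarith [hfin2]) hr0
end

section
/- Let h : B₁ → ℝ satisfy h(0) = 0, h(x) ≥ −C₁|x|^{1+β} for all x, and the one-sided estimate h(x) ≤ p·x + C₀|x|^{1+β} for every p in the super-differential of h at 0. Then the super-differential of h at 0 contains only the zero vector. -/
open Metric

/-- if `h(0) = 0`, `h(x) ≥ −C₁|x|^{1+β}`, and
`h(x) ≤ p·x + C₀|x|^{1+β}` for every `p` in the super-differential of `h` at `0`,
then the super-differential of `h` at `0` contains only the zero vector. -/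
theorem stmt3 (n : ℕ) (β : ℝ) (hβ : β ∈ Set.Ioo (0:ℝ) 1)
    (C₀ C₁ : ℝ) (hC₀ : 0 ≤ C₀) (hC₁ : 0 ≤ C₁)
    (h : EuclideanSpace ℝ (Fin n) → ℝ)
    (h0 : h 0 = 0)
    (hlow : ∀ x ∈ ball (0 : EuclideanSpace ℝ (Fin n)) 1, -C₁ * ‖x‖ ^ (1 + β) ≤ h x)
    (hup : ∀ p ∈ superDiff h (ball 0 1) 0,
      ∀ x ∈ ball (0 : EuclideanSpace ℝ (Fin n)) 1,
        h x ≤ (inner ℝ p x : ℝ) + C₀ * ‖x‖ ^ (1 + β)) :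
    ∀ p ∈ superDiff h (ball 0 1) 0, p = 0 := by
  intro p hp
  by_contra hne
  set M := ‖p‖ with hMdef
  have hM : 0 < M := norm_pos_iff.mpr hne
  have hβ0 : 0 < β := hβ.1
  obtain ⟨δ, hδ, H⟩ := hp (M / 2) (by positivity)
  set r := (M / (2 * (C₁ + 1))) ^ (1 / β) with hrdef
  have hr : 0 < r := Real.rpow_pos_of_pos (by positivity) _
  set s := min (δ / 2) (min (1 / 2) r) with hsdef
  have hs : 0 < s := lt_min (by positivity) (lt_min (by norm_num) hr)
  set x := (-(s / M)) • p with hxdef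
  have hxnorm : ‖x‖ = s := by
    rw [hxdef, norm_smul, Real.norm_eq_abs, abs_neg, abs_div, abs_of_pos hs,
      abs_of_pos hM]
    field_simp
    exact hMdef.symm
  have hx0 : (0 : EuclideanSpace ℝ (Fin n)) + x = x := zero_add x
  have hxδ : ‖x‖ < δ := by
    rw [hxnorm]
    have : s ≤ δ / 2 := min_le_left _ _
    linarith
  have hs1 : s < 1 := by
    have : s ≤ 1 / 2 := le_trans (min_le_right _ _) (min_le_left _ _)
    linarith
  have hxball : (0 : EuclideanSpace ℝ (Fin n)) + x ∈ ball (0 : EuclideanSpace ℝ (Fin n)) 1 := by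
    rw [hx0, mem_ball_zero_iff, hxnorm]; exact hs1
  have hinner : (inner ℝ p x : ℝ) = -(s * M) := by
    rw [hxdef, real_inner_smul_right, real_inner_self_eq_norm_sq]
    rw [← hMdef]
    field_simp
  have h1 := H x hxδ hxball
  rw [hx0, h0, hinner, hxnorm] at h1
  have h2 := hlow (0 + x) hxball
  rw [hx0, hxnorm] at h2
  -- bound C₁ * s ^ β < M / 2
  have hsr : s ≤ r := le_trans (min_le_right _ _) (min_le_right _ _)
  have hrpow : r ^ β = M / (2 * (C₁ + 1)) := by
    rw [hrdef, ← Real.rpow_mul (by positivity), one_div, inv_mul_cancel₀ hβ0.ne', Real.rpow_one]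
  have hsb : C₁ * s ^ β < M / 2 := by
    have h3 : s ^ β ≤ r ^ β := Real.rpow_le_rpow hs.le hsr hβ0.le
    have h4 : C₁ * s ^ β ≤ C₁ * (M / (2 * (C₁ + 1))) := by
      rw [← hrpow]; exact mul_le_mul_of_nonneg_left h3 hC₁
    have h5 : C₁ * (M / (2 * (C₁ + 1))) < (C₁ + 1) * (M / (2 * (C₁ + 1))) :=
      mul_lt_mul_of_pos_right (lt_add_one C₁) (by positivity)
    have h6 : (C₁ + 1) * (M / (2 * (C₁ + 1))) = M / 2 := by
      field_simp
    linarith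
  have hpow : s ^ ((1 : ℝ) + β) = s * s ^ β := by
    rw [Real.rpow_add hs, Real.rpow_one]
  rw [hpow] at h2
  nlinarith [mul_lt_mul_of_pos_right hsb hs]
end
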